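/- Let f be a real-valued measurable function, λ ∈ (0,1/2), ε > 0, and Q a cube with a_λ(f;Q) < ε. If Q₁ ⊂ Q is a cube with |Q₁| = (1/2 + λ)|Q|, then |{x ∈ Q₁ : |f(x) - m_f(Q)| ≤ a_λ(f;Q)}| > |Q₁|/2, and consequently |m_f(Q) - m_f(Q₁)| ≤ a_λ(f;Q) for any median value m_f(Q₁). -/

import Mathlib

open MeasureTheory Set Metric

/-- The non-increasing rearrangement of a real-valued measurable function on `ℝⁿ`. -/
noncomputable def rearr {n : ℕ} (f : (Fin n → ℝ) → ℝ) (t : ℝ) : ℝ :=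
  sInf {α : ℝ | 0 < α ∧ volume {x | α < |f x|} < ENNReal.ofReal t}

/-- `m` is a median value of `f` over the set `Q`. -/
def IsMedian {n : ℕ} (f : (Fin n → ℝ) → ℝ) (Q : Set (Fin n → ℝ)) (m : ℝ) : Prop :=
  volume {x ∈ Q | m < f x} ≤ volume Q / 2 ∧ volume {x ∈ Q | f x < m} ≤ volume Q / 2

/-- Let `λ ∈ (0,1/2)`, `ε > 0`, and `Q` a cube (closed sup-metric ball) with
`a_λ(f;Q) < ε` for a median `m` of `f` over `Q`. If `Q₁ ⊆ Q` is a cube with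
`|Q₁| = (1/2 + λ)|Q|`, then `|{x ∈ Q₁ : |f x - m| ≤ a_λ(f;Q)}| > |Q₁|/2` and
`|m - m₁| ≤ a_λ(f;Q)` for every median `m₁` of `f` over `Q₁`. -/
theorem median_step {n : ℕ} (lam : ℝ) (hlam : lam ∈ Set.Ioo (0 : ℝ) (1/2))
    (eps : ℝ) (heps : 0 < eps)
    (f : (Fin n → ℝ) → ℝ) (hf : Measurable f)
    (c : Fin n → ℝ) (r : ℝ) (hr : 0 < r) (m : ℝ)
    (hm : IsMedian f (closedBall c r) m)
    (ha : rearr ((closedBall c r).indicator fun x => f x - m)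
      (lam * (volume (closedBall c r)).toReal) < eps)
    (c₁ : Fin n → ℝ) (r₁ : ℝ) (hr₁ : 0 < r₁)
    (hsub : closedBall c₁ r₁ ⊆ closedBall c r)
    (hvol : (volume (closedBall c₁ r₁)).toReal =
      (1/2 + lam) * (volume (closedBall c r)).toReal) :
    volume (closedBall c₁ r₁) / 2 <
      volume {x ∈ closedBall c₁ r₁ |
        |f x - m| ≤ rearr ((closedBall c r).indicator fun x => f x - m)
          (lam * (volume (closedBall c r)).toReal)} ∧
    ∀ m₁ : ℝ, IsMedian f (closedBall c₁ r₁) m₁ →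
      |m - m₁| ≤ rearr ((closedBall c r).indicator fun x => f x - m)
        (lam * (volume (closedBall c r)).toReal) := by
  obtain ⟨hlam0, hlam2⟩ := hlam
  set Q := closedBall c r with hQdef
  set Q₁ := closedBall c₁ r₁ with hQ₁def
  set g : (Fin n → ℝ) → ℝ := Q.indicator fun x => f x - m with hgdef
  set T : ℝ := lam * (volume Q).toReal with hTdef
  set a : ℝ := rearr g T with hadef
  have hgm : Measurable g := (hf.sub measurable_const).indicator measurableSet_closedBall
  have hVtop : volume Q ≠ ⊤ := (isCompact_closedBall c r).measure_lt_top.ne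
  have hV0 : volume Q ≠ 0 :=
    ((measure_ball_pos volume c hr).trans_le (measure_mono ball_subset_closedBall)).ne'
  have hVt : 0 < (volume Q).toReal := ENNReal.toReal_pos hV0 hVtop
  have hT0 : 0 < T := mul_pos hlam0 hVt
  set S : Set ℝ := {α : ℝ | 0 < α ∧ volume {x | α < |g x|} < ENNReal.ofReal T} with hSdef
  have haS : a = sInf S := rfl
  -- S is nonempty
  have hSne : S.Nonempty := by
    have hmeas : ∀ k : ℕ, NullMeasurableSet {x | (k : ℝ) + 1 < |g x|} volume :=
      fun k => (measurableSet_lt measurable_const hgm.abs).nullMeasurableSet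
    have hanti : Antitone fun k : ℕ => {x | (k : ℝ) + 1 < |g x|} := by
      intro i j hij x hx
      simp only [mem_setOf_eq] at hx ⊢
      have : (i : ℝ) ≤ (j : ℝ) := Nat.cast_le.mpr hij
      linarith
    have hfin : ∃ k : ℕ, volume {x | (k : ℝ) + 1 < |g x|} ≠ ⊤ := by
      refine ⟨0, ne_top_of_le_ne_top hVtop (measure_mono fun x hx => ?_)⟩
      simp only [mem_setOf_eq] at hx
      by_contra hxQ
      rw [hgdef, indicator_of_notMem hxQ] at hx
      simp at hx
      linarith
    have hI : (⋂ k : ℕ, {x | (k : ℝ) + 1 < |g x|}) = ∅ := by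
      ext x
      simp only [mem_iInter, mem_setOf_eq, mem_empty_iff_false, iff_false, not_forall, not_lt]
      obtain ⟨k, hk⟩ := exists_nat_gt (|g x|)
      exact ⟨k, by linarith⟩
    have htend := MeasureTheory.tendsto_measure_iInter_atTop hmeas hanti hfin
    rw [hI, measure_empty] at htend
    have hev := htend.eventually_lt_const (ENNReal.ofReal_pos.mpr hT0)
    obtain ⟨k, hk⟩ := hev.exists
    exact ⟨(k : ℝ) + 1, by positivity, hk⟩
  have ha0 : 0 ≤ a := by
    rw [haS]
    exact Real.sInf_nonneg fun α hα => le_of_lt hα.1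
  -- the key distribution bound
  have hbound : volume {x | a < |g x|} ≤ ENNReal.ofReal T := by
    have hsk : ∀ k : ℕ, volume {x | a + 1 / ((k : ℝ) + 1) < |g x|} ≤ ENNReal.ofReal T := by
      intro k
      obtain ⟨β, hβS, hβlt⟩ := Real.lt_sInf_add_pos hSne
        (show (0 : ℝ) < 1 / ((k : ℝ) + 1) by positivity)
      rw [← haS] at hβlt
      refine le_of_lt (lt_of_le_of_lt (measure_mono fun x hx => ?_) hβS.2)
      simp only [mem_setOf_eq] at hx ⊢
      linarith
    have heq : {x | a < |g x|} = ⋃ k : ℕ, {x | a + 1 / ((k : ℝ) + 1) < |g x|} := by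
      ext x
      simp only [mem_setOf_eq, mem_iUnion]
      constructor
      · intro hx
        obtain ⟨k, hk⟩ := exists_nat_one_div_lt (sub_pos.mpr hx)
        exact ⟨k, by linarith⟩
      · rintro ⟨k, hk⟩
        have : (0 : ℝ) < 1 / ((k : ℝ) + 1) := by positivity
        linarith
    have hmono : Monotone fun k : ℕ => {x | a + 1 / ((k : ℝ) + 1) < |g x|} := by
      intro i j hij x hx
      simp only [mem_setOf_eq] at hx ⊢
      have h1 : (i : ℝ) ≤ (j : ℝ) := Nat.cast_le.mpr hij
      have h2 : 1 / ((j : ℝ) + 1) ≤ 1 / ((i : ℝ) + 1) := by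
        apply one_div_le_one_div_of_le <;> linarith
      linarith
    rw [heq, hmono.directed_le.measure_iUnion]
    exact iSup_le hsk
  -- transfer to Q₁
  have hA1 : volume {x ∈ Q₁ | a < |f x - m|} ≤ ENNReal.ofReal T := by
    refine le_trans (measure_mono fun x hx => ?_) hbound
    obtain ⟨hxQ₁, hxlt⟩ := hx
    simp only [mem_setOf_eq]
    rwa [hgdef, indicator_of_mem (hsub hxQ₁)]
  have hV1top : volume Q₁ ≠ ⊤ := (isCompact_closedBall c₁ r₁).measure_lt_top.ne
  have hV1 : volume Q₁ = ENNReal.ofReal ((1 / 2 + lam) * (volume Q).toReal) := by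
    rw [← hvol, ENNReal.ofReal_toReal hV1top]
  have hcover : volume Q₁ ≤ volume {x ∈ Q₁ | |f x - m| ≤ a} + ENNReal.ofReal T := by
    calc volume Q₁
        ≤ volume ({x ∈ Q₁ | |f x - m| ≤ a} ∪ {x ∈ Q₁ | a < |f x - m|}) := by
          refine measure_mono fun x hx => ?_
          rcases le_or_gt (|f x - m|) a with h | h
          · exact Or.inl ⟨hx, h⟩
          · exact Or.inr ⟨hx, h⟩
      _ ≤ volume {x ∈ Q₁ | |f x - m| ≤ a} + volume {x ∈ Q₁ | a < |f x - m|} :=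
          measure_union_le _ _
      _ ≤ _ := add_le_add_right hA1 _
  have hmain : volume Q₁ / 2 < volume {x ∈ Q₁ | |f x - m| ≤ a} := by
    have hge : ENNReal.ofReal ((volume Q).toReal / 2) ≤ volume {x ∈ Q₁ | |f x - m| ≤ a} := by
      have h1 : volume Q₁ - ENNReal.ofReal T ≤ volume {x ∈ Q₁ | |f x - m| ≤ a} :=
        tsub_le_iff_right.mpr hcover
      rw [hV1, hTdef] at h1
      calc ENNReal.ofReal ((volume Q).toReal / 2)
          = ENNReal.ofReal ((1 / 2 + lam) * (volume Q).toReal - lam * (volume Q).toReal) := by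
            congr 1; ring
        _ = ENNReal.ofReal ((1 / 2 + lam) * (volume Q).toReal)
            - ENNReal.ofReal (lam * (volume Q).toReal) :=
            ENNReal.ofReal_sub _ (le_of_lt hT0)
        _ ≤ _ := h1
    refine lt_of_lt_of_le ?_ hge
    rw [hV1, show (2 : ENNReal) = ENNReal.ofReal 2 by simp,
      ← ENNReal.ofReal_div_of_pos two_pos]
    refine (ENNReal.ofReal_lt_ofReal_iff (by positivity)).mpr ?_
    rw [div_lt_div_iff₀ (by norm_num) (by norm_num)]
    nlinarith
  refine ⟨hmain, ?_⟩
  intro m₁ hm₁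
  by_contra hcon
  push_neg at hcon
  rcases lt_abs.mp hcon with h | h
  · -- a < m - m₁, so f > m₁ on the good set
    have hss : {x ∈ Q₁ | |f x - m| ≤ a} ⊆ {x ∈ Q₁ | m₁ < f x} := by
      rintro x ⟨hx, hfx⟩
      have := abs_le.mp hfx
      exact ⟨hx, by linarith [this.1]⟩
    exact absurd ((hmain.trans_le (measure_mono hss)).trans_le hm₁.1) (lt_irrefl _)
  · -- a < m₁ - m, so f < m₁ on the good set
    have hss : {x ∈ Q₁ | |f x - m| ≤ a} ⊆ {x ∈ Q₁ | f x < m₁} := by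
      rintro x ⟨hx, hfx⟩
      have := abs_le.mp hfx
      exact ⟨hx, by linarith [this.2]⟩
    exact absurd ((hmain.trans_le (measure_mono hss)).trans_le hm₁.2) (lt_irrefl _)
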